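/- Let k ≥ 12 with k ≡ 2 (mod 4), set N = (k-4)/2 and m = (k-2)/4, and let A_{ij} = C(2j,2i) - C(2j,k-2-2i) + δ(i+j=(k-2)/2). Then for 1 ≤ j ≤ (k-6)/4 one has A_{m,j} + A_{m,(k-2)/2-j} = 0; one has A_{m,m} = 1; and for (k+2)/4 ≤ j ≤ N one has -A_{m,j} + A_{m,(k-2)/2-j} = 0. -/
import Mathlib


theorem middle_row_computation
    (k : ℕ) (hk : 12 ≤ k) (hk4 : k % 4 = 2)
    (A : ℕ → ℕ → ℚ)
    (hA : ∀ i j : ℕ, A i j = (Nat.choose (2 * j) (2 * i) : ℚ)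
        - (Nat.choose (2 * j) (k - 2 - 2 * i) : ℚ)
        + (if i + j = (k - 2) / 2 then 1 else 0)) :
    (∀ j : ℕ, 1 ≤ j → j ≤ (k - 6) / 4 →
        A ((k - 2) / 4) j + A ((k - 2) / 4) ((k - 2) / 2 - j) = 0)
    ∧ A ((k - 2) / 4) ((k - 2) / 4) = 1
    ∧ (∀ j : ℕ, (k + 2) / 4 ≤ j → j ≤ (k - 4) / 2 →
        -A ((k - 2) / 4) j + A ((k - 2) / 4) ((k - 2) / 2 - j) = 0) := by
  obtain ⟨m, rfl⟩ : ∃ m, k = 4 * m + 2 := ⟨k / 4, by omega⟩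
  have hm : 3 ≤ m := by omega
  have hdiv2 : (4 * m + 2 - 2) / 2 = 2 * m := by omega
  have hdiv4 : (4 * m + 2 - 2) / 4 = m := by omega
  have hkey : ∀ j : ℕ, A m j = if j = m then 1 else 0 := by
    intro j
    rw [hA]
    have h1 : 4 * m + 2 - 2 - 2 * m = 2 * m := by omega
    rw [h1, hdiv2, sub_self, zero_add]
    congr 1
    simp only [eq_iff_iff]
    omega
  rw [hdiv4, hdiv2]
  refine ⟨?_, ?_, ?_⟩
  · intro j h1 h2
    rw [hkey, hkey, if_neg (by omega), if_neg (by omega), add_zero]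
  · rw [hkey, if_pos rfl]
  · intro j h1 h2
    rw [hkey, hkey, if_neg (by omega), if_neg (by omega), neg_zero, add_zero]
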